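/- In the lower-bound graph consisting of √n parallel paths joined to a balanced binary tree of depth log n − 1, with weights encoding set-disjointness instances X, Y ⊆ {1,…,√n}: if X ∩ Y ≠ ∅ then every connected dominating set contains at least one vertex of weight M = α·n + 1, while if X ∩ Y = ∅ then the set of all weight-1 vertices is a connected dominating set of total weight less than n. -/

import Mathlib

/-- Vertices of the lower-bound graph with `m = 2^d` columns: `2^d` parallel paths of length
`2^d` each (pairs `(i, j)`: path `i`, column `j`), plus a balanced binary tree of depth `d`
(node `⟨l, t⟩`: level `l`, index `t`), whose `2^d` leaves align with the columns. -/
def LBVertex (d : ℕ) := (Fin (2 ^ d) × Fin (2 ^ d)) ⊕ (Σ l : Fin (d + 1), Fin (2 ^ (l : ℕ)))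

instance (d : ℕ) : Fintype (LBVertex d) := by unfold LBVertex; infer_instance
instance (d : ℕ) : DecidableEq (LBVertex d) := by unfold LBVertex; infer_instance

/-- Edges: consecutive path vertices; tree node `⟨l, t⟩` to its children `⟨l+1, 2t⟩` and
`⟨l+1, 2t+1⟩`; each leaf `⟨d, t⟩` to all path vertices in column `t`. -/
def lbRel (d : ℕ) : LBVertex d → LBVertex d → Prop
  | Sum.inl (i, j), Sum.inl (i', j') => i = i' ∧ (j' : ℕ) = (j : ℕ) + 1
  | Sum.inr ⟨l, t⟩, Sum.inr ⟨l', t'⟩ =>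
      (l' : ℕ) = (l : ℕ) + 1 ∧ ((t' : ℕ) = 2 * (t : ℕ) ∨ (t' : ℕ) = 2 * (t : ℕ) + 1)
  | Sum.inr ⟨l, t⟩, Sum.inl (_, j) => (l : ℕ) = d ∧ (j : ℕ) = (t : ℕ)
  | _, _ => False

def lbGraph (d : ℕ) : SimpleGraph (LBVertex d) := SimpleGraph.fromRel (lbRel d)

/-- Weights encoding the set-disjointness instance `X, Y ⊆ {0,…,2^d−1}`: internal tree nodes,
Alice's leaf (leaf `0`), Bob's leaf (leaf `2^d−1`) and internal path nodes get weight `1`;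
the other leaves get weight `M`; the leftmost node of path `i` gets `M` iff `i ∈ X` else `1`;
the rightmost node of path `i` gets `M` iff `i ∈ Y` else `1`. -/
noncomputable def lbWeight (d : ℕ) (Xs Ys : Finset (Fin (2 ^ d))) (M : ℝ) :
    LBVertex d → ℝ
  | Sum.inl (i, j) =>
      if (j : ℕ) = 0 then (if i ∈ Xs then M else 1)
      else if (j : ℕ) = 2 ^ d - 1 then (if i ∈ Ys then M else 1) else 1
  | Sum.inr ⟨l, t⟩ =>
      if (l : ℕ) < d then 1
      else if (t : ℕ) = 0 ∨ (t : ℕ) = 2 ^ d - 1 then 1 else M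

namespace LBP
variable {d : ℕ}

def rootV (d : ℕ) : LBVertex d :=
  Sum.inr ⟨⟨0, Nat.succ_pos d⟩, ⟨0, Nat.two_pow_pos 0⟩⟩

lemma adj_iff {a b : LBVertex d} :
    (lbGraph d).Adj a b ↔ a ≠ b ∧ (lbRel d a b ∨ lbRel d b a) :=
  SimpleGraph.fromRel_adj _ _ _

lemma sigma_mk_eq {l l' : Fin (d+1)} {t : Fin (2^(l:ℕ))} {t' : Fin (2^(l':ℕ))}
    (hl : (l:ℕ) = (l':ℕ)) (ht : (t:ℕ) = (t':ℕ)) :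
    (Sum.inr ⟨l,t⟩ : LBVertex d) = Sum.inr ⟨l',t'⟩ := by
  obtain ⟨l, hl2⟩ := l; obtain ⟨l', hl2'⟩ := l'
  simp only at hl; subst hl
  obtain ⟨t, ht2⟩ := t; obtain ⟨t', ht2'⟩ := t'
  simp only at ht; subst ht
  rfl

lemma inr_ne_inr {l l' : Fin (d+1)} {t : Fin (2^(l:ℕ))} {t' : Fin (2^(l':ℕ))}
    (hl : (l:ℕ) ≠ (l':ℕ)) :
    (Sum.inr ⟨l,t⟩ : LBVertex d) ≠ Sum.inr ⟨l',t'⟩ := by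
  intro he
  exact hl (congrArg (fun x : LBVertex d => match x with
    | Sum.inr s => (s.1 : ℕ)
    | Sum.inl _ => 0) he)

lemma inl_ne_inl {i i' j j' : Fin (2^d)} (hj : (j:ℕ) ≠ (j':ℕ)) :
    (Sum.inl (i,j) : LBVertex d) ≠ Sum.inl (i',j') := by
  intro he
  exact hj (congrArg (fun x : LBVertex d => match x with
    | Sum.inl p => (p.2 : ℕ)
    | Sum.inr _ => 0) he)

lemma four_le (hd : 2 ≤ d) : 4 ≤ 2^d := by
  calc (4:ℕ) = 2^2 := rfl
  _ ≤ 2^d := Nat.pow_le_pow_right (by norm_num) hd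

lemma walk_closed {V : Type*} {G : SimpleGraph V} (P : V → Prop)
    (h : ∀ a b, P a → G.Adj a b → P b) : ∀ {a b : V}, G.Walk a b → P a → P b
  | _, _, SimpleGraph.Walk.nil, ha => ha
  | _, _, SimpleGraph.Walk.cons hadj p, ha => walk_closed P h p (h _ _ ha hadj)

lemma reach_closed {V : Type*} {G : SimpleGraph V} (P : V → Prop)
    (h : ∀ a b, P a → G.Adj a b → P b) {a b : V} (hr : G.Reachable a b) (ha : P a) : P b := by
  obtain ⟨p⟩ := hr; exact walk_closed P h p ha

section Main
variable (Xs Ys : Finset (Fin (2^d))) (M : ℝ)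

lemma w_one_interior {i j : Fin (2^d)} (h0 : (j:ℕ) ≠ 0) (h1 : (j:ℕ) ≠ 2^d - 1) :
    lbWeight d Xs Ys M (Sum.inl (i,j)) = 1 := by
  show (if (j:ℕ) = 0 then _ else if (j:ℕ) = 2^d - 1 then _ else (1:ℝ)) = 1
  rw [if_neg h0, if_neg h1]

lemma w_left_mem {i : Fin (2^d)} (hiX : i ∈ Xs) {j : Fin (2^d)} (hj : (j:ℕ) = 0) :
    lbWeight d Xs Ys M (Sum.inl (i,j)) = M := by
  show (if (j:ℕ) = 0 then (if i ∈ Xs then M else 1) else _) = M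
  rw [if_pos hj, if_pos hiX]

lemma w_right_mem (hd : 2 ≤ d) {i : Fin (2^d)} (hiY : i ∈ Ys) {j : Fin (2^d)}
    (hj : (j:ℕ) = 2^d - 1) :
    lbWeight d Xs Ys M (Sum.inl (i,j)) = M := by
  have hm := four_le hd
  show (if (j:ℕ) = 0 then _ else if (j:ℕ) = 2^d - 1 then (if i ∈ Ys then M else 1) else (1:ℝ)) = M
  rw [if_neg (by omega), if_pos hj, if_pos hiY]

lemma w_leaf_mid (hd : 2 ≤ d) {l : Fin (d+1)} {t : Fin (2^(l:ℕ))}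
    (hl : (l:ℕ) = d) (ht0 : (t:ℕ) ≠ 0) (ht1 : (t:ℕ) ≠ 2^d - 1) :
    lbWeight d Xs Ys M (Sum.inr ⟨l,t⟩) = M := by
  show (if (l:ℕ) < d then (1:ℝ) else if (t:ℕ) = 0 ∨ (t:ℕ) = 2^d - 1 then 1 else M) = M
  rw [if_neg (by omega), if_neg (by tauto)]

lemma w_tree_internal {l : Fin (d+1)} {t : Fin (2^(l:ℕ))} (hl : (l:ℕ) < d) :
    lbWeight d Xs Ys M (Sum.inr ⟨l,t⟩) = 1 := by
  show (if (l:ℕ) < d then (1:ℝ) else _) = 1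
  rw [if_pos hl]

lemma w_leaf_good {l : Fin (d+1)} {t : Fin (2^(l:ℕ))}
    (hl : ¬ (l:ℕ) < d) (ht : (t:ℕ) = 0 ∨ (t:ℕ) = 2^d - 1) :
    lbWeight d Xs Ys M (Sum.inr ⟨l,t⟩) = 1 := by
  show (if (l:ℕ) < d then (1:ℝ) else if (t:ℕ) = 0 ∨ (t:ℕ) = 2^d - 1 then 1 else M) = 1
  rw [if_neg hl, if_pos ht]

lemma part1 (hd : 2 ≤ d) (i : Fin (2^d)) (hiX : i ∈ Xs) (hiY : i ∈ Ys)
    (D : Set (LBVertex d))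
    (hdom : ∀ v, v ∉ D → ∃ u ∈ D, (lbGraph d).Adj v u)
    (hconn : ((lbGraph d).induce D).Connected) :
    ∃ v ∈ D, lbWeight d Xs Ys M v = M := by
  by_contra hcon
  push_neg at hcon
  have hm := four_le hd
  have hnotD : ∀ v : LBVertex d, lbWeight d Xs Ys M v = M → v ∉ D := by
    intro v hw hv; exact hcon v hv hw
  have hint : ∃ (j : Fin (2^d)) (_ : Sum.inl (i,j) ∈ D), 1 ≤ (j:ℕ) ∧ (j:ℕ) ≤ 2^d - 2 := by
    set j1 : Fin (2^d) := ⟨1, by omega⟩ with hj1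
    by_cases h1 : Sum.inl (i, j1) ∈ D
    · exact ⟨j1, h1, by simp [hj1], by simp [hj1]; omega⟩
    · obtain ⟨u, huD, hadj⟩ := hdom _ h1
      replace hadj := adj_iff.mp hadj
      obtain ⟨-, hrel | hrel⟩ := hadj
      · cases u with
        | inl p =>
          obtain ⟨i', j'⟩ := p
          obtain ⟨hi', hj'⟩ := hrel
          subst hi'
          exact ⟨j', huD, by omega, by simp [hj1] at hj'; omega⟩
        | inr s => exact absurd hrel (by obtain ⟨l, t⟩ := s; exact not_false)
      · cases u with
        | inl p =>
          obtain ⟨i', j'⟩ := p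
          obtain ⟨hi', hj'⟩ := hrel
          subst hi'
          have hj'0 : (j':ℕ) = 0 := by have h1' : (j1:ℕ) = 1 := rfl; omega
          exact absurd huD (hnotD _ (w_left_mem Xs Ys M hiX hj'0))
        | inr s =>
          obtain ⟨l, t⟩ := s
          obtain ⟨hl, ht⟩ := hrel
          have ht1 : (t:ℕ) = 1 := by simp [hj1] at ht; omega
          exact absurd huD
            (hnotD _ (w_leaf_mid Xs Ys M hd hl (by omega) (by omega)))
  obtain ⟨j0, hj0D, hj0a, hj0b⟩ := hint
  have htree : ∃ (s : Σ l : Fin (d+1), Fin (2^(l:ℕ))), Sum.inr s ∈ D := by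
    set rt : LBVertex d := Sum.inr ⟨⟨0, Nat.succ_pos d⟩, ⟨0, Nat.two_pow_pos 0⟩⟩ with hrt
    by_cases hr : rt ∈ D
    · exact ⟨_, hr⟩
    · obtain ⟨u, huD, hadj⟩ := hdom _ hr
      replace hadj := adj_iff.mp hadj
      obtain ⟨-, hrel | hrel⟩ := hadj
      · cases u with
        | inl p =>
          obtain ⟨i', j'⟩ := p
          obtain ⟨hl, -⟩ := hrel
          simp at hl; omega
        | inr s => exact ⟨s, huD⟩
      · cases u with
        | inl p => obtain ⟨i', j'⟩ := p; exact absurd hrel not_false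
        | inr s =>
          obtain ⟨l, t⟩ := s
          obtain ⟨hl, -⟩ := hrel
          simp at hl
  obtain ⟨s0, hs0D⟩ := htree
  set P : {x // x ∈ D} → Prop :=
    fun x => ∃ j : Fin (2^d), 1 ≤ (j:ℕ) ∧ (j:ℕ) ≤ 2^d - 2 ∧ x.1 = Sum.inl (i, j) with hP
  have hclosed : ∀ a b : {x // x ∈ D},
      P a → ((lbGraph d).induce D).Adj a b → P b := by
    rintro ⟨a, haD⟩ ⟨b, hbD⟩ ⟨j, hj1, hj2, hav⟩ hadj
    have hab : (lbGraph d).Adj a b := hadj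
    have hav' : a = Sum.inl (i, j) := hav
    rw [hav'] at hab
    replace hab := adj_iff.mp hab
    obtain ⟨-, hrel | hrel⟩ := hab
    · cases b with
      | inl p =>
        obtain ⟨i', j'⟩ := p
        obtain ⟨hi', hj'⟩ := hrel
        subst hi'
        rcases Nat.lt_or_ge (j':ℕ) (2^d - 1) with hlt | hge
        · exact ⟨j', by omega, by omega, rfl⟩
        · exfalso
          have : (j':ℕ) = 2^d - 1 := by have := j'.isLt; omega
          exact hnotD _ (w_right_mem Xs Ys M hd hiY this) hbD
      | inr s =>
        obtain ⟨l, t⟩ := s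
        exact absurd hrel not_false
    · cases b with
      | inl p =>
        obtain ⟨i', j'⟩ := p
        obtain ⟨hi', hj'⟩ := hrel
        subst hi'
        rcases Nat.eq_or_lt_of_le (show 0 ≤ (j':ℕ) by omega) with heq | hlt
        · exfalso
          exact hnotD _ (w_left_mem Xs Ys M hiX heq.symm) hbD
        · exact ⟨j', by omega, by omega, rfl⟩
      | inr s =>
        obtain ⟨l, t⟩ := s
        obtain ⟨hl, ht⟩ := hrel
        exfalso
        exact hnotD _ (w_leaf_mid Xs Ys M hd hl (by omega) (by omega)) hbD
  have hreach := hconn.preconnected ⟨Sum.inl (i,j0), hj0D⟩ ⟨Sum.inr s0, hs0D⟩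
  have hPend := reach_closed P hclosed hreach ⟨j0, hj0a, hj0b, rfl⟩
  obtain ⟨j, -, -, hcontra⟩ := hPend
  exact absurd hcontra (by simp)

lemma tree_reach (hd : 1 ≤ d) :
    ∀ (k : ℕ) (l : Fin (d+1)) (t : Fin (2^(l:ℕ))), (l:ℕ) = k →
      ∀ (h : lbWeight d Xs Ys M (Sum.inr ⟨l,t⟩) = 1)
        (hroot : lbWeight d Xs Ys M (rootV d) = 1),
      ((lbGraph d).induce {u | lbWeight d Xs Ys M u = 1}).Reachable
        ⟨Sum.inr ⟨l,t⟩, h⟩ ⟨rootV d, hroot⟩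
  | 0, l, t, hl, h, hroot => by
      have ht : (t:ℕ) = 0 := by
        have h1 := t.isLt
        have h2 : (2:ℕ)^(l:ℕ) = 1 := by rw [hl]; rfl
        omega
      have he : (Sum.inr ⟨l,t⟩ : LBVertex d) = rootV d := sigma_mk_eq hl ht
      have : (⟨Sum.inr ⟨l,t⟩, h⟩ : {u | lbWeight d Xs Ys M u = 1}) = ⟨rootV d, hroot⟩ :=
        Subtype.ext he
      rw [this]
  | (k+1), l, t, hl, h, hroot => by
      have hlk : k + 1 ≤ d := by have := l.isLt; omega
      set l' : Fin (d+1) := ⟨k, by omega⟩ with hl'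
      have htlt : (t:ℕ) < 2^(k+1) := by
        have h1 := t.isLt
        have h2 : (2:ℕ)^(l:ℕ) = 2^(k+1) := by rw [hl]
        omega
      have ht' : (t:ℕ)/2 < 2^((l':ℕ)) := by
        show (t:ℕ)/2 < 2^k
        have : 2^(k+1) = 2^k * 2 := pow_succ 2 k
        omega
      set t' : Fin (2^((l':ℕ))) := ⟨(t:ℕ)/2, ht'⟩ with ht'def
      have hw' : lbWeight d Xs Ys M (Sum.inr ⟨l',t'⟩) = 1 := by
        show (if (l':ℕ) < d then (1:ℝ) else _) = 1
        rw [if_pos (by show k < d; omega)]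
      have hadj : (lbGraph d).Adj (Sum.inr ⟨l,t⟩) (Sum.inr ⟨l',t'⟩) := by
        refine adj_iff.mpr ?_
        refine ⟨inr_ne_inr (by simp [hl, hl']), Or.inr ?_⟩
        show (l:ℕ) = (l':ℕ) + 1 ∧ ((t:ℕ) = 2 * ((t:ℕ)/2) ∨ (t:ℕ) = 2 * ((t:ℕ)/2) + 1)
        constructor
        · simp [hl, hl']
        · omega
      have hstep : ((lbGraph d).induce {u | lbWeight d Xs Ys M u = 1}).Adj
          ⟨Sum.inr ⟨l,t⟩, h⟩ ⟨Sum.inr ⟨l',t'⟩, hw'⟩ := hadj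
      exact hstep.reachable.trans (tree_reach hd k l' t' rfl hw' hroot)

lemma row_left (hd : 2 ≤ d) (i : Fin (2^d)) (hX : i ∉ Xs)
    (h0 : lbWeight d Xs Ys M (Sum.inl (i, ⟨0, Nat.two_pow_pos d⟩)) = 1) :
    ∀ (k : ℕ) (j : Fin (2^d)), (j:ℕ) = k →
      ∀ (h : lbWeight d Xs Ys M (Sum.inl (i,j)) = 1),
      ((lbGraph d).induce {u | lbWeight d Xs Ys M u = 1}).Reachable
        ⟨Sum.inl (i,j), h⟩ ⟨Sum.inl (i, ⟨0, Nat.two_pow_pos d⟩), h0⟩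
  | 0, j, hj, h => by
      obtain rfl : j = ⟨0, Nat.two_pow_pos d⟩ := Fin.ext hj
      exact SimpleGraph.Reachable.refl _
  | (k+1), j, hj, h => by
      have hjlt := j.isLt
      set j' : Fin (2^d) := ⟨k, by omega⟩ with hj'
      have hw' : lbWeight d Xs Ys M (Sum.inl (i,j')) = 1 := by
        rcases Nat.eq_zero_or_pos k with hk | hk
        · show (if (j':ℕ) = 0 then (if i ∈ Xs then M else 1) else _) = 1
          rw [if_pos (by show k = 0; exact hk), if_neg hX]
        · exact w_one_interior Xs Ys M (by show k ≠ 0; omega)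
            (by show k ≠ 2^d - 1; omega)
      have hadj : (lbGraph d).Adj (Sum.inl (i,j)) (Sum.inl (i,j')) := by
        refine adj_iff.mpr ?_
        exact ⟨inl_ne_inl (by simp [hj, hj']), Or.inr ⟨rfl, by simp [hj, hj']⟩⟩
      have hstep : ((lbGraph d).induce {u | lbWeight d Xs Ys M u = 1}).Adj
          ⟨Sum.inl (i,j), h⟩ ⟨Sum.inl (i,j'), hw'⟩ := hadj
      exact hstep.reachable.trans (row_left hd i hX h0 k j' rfl hw')

lemma row_right (hd : 2 ≤ d) (i : Fin (2^d)) (hY : i ∉ Ys)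
    (hE : lbWeight d Xs Ys M (Sum.inl (i, ⟨2^d - 1, Nat.sub_lt (Nat.two_pow_pos d) one_pos⟩)) = 1) :
    ∀ (k : ℕ) (j : Fin (2^d)), 2^d - 1 - (j:ℕ) = k →
      ∀ (h : lbWeight d Xs Ys M (Sum.inl (i,j)) = 1),
      ((lbGraph d).induce {u | lbWeight d Xs Ys M u = 1}).Reachable
        ⟨Sum.inl (i,j), h⟩ ⟨Sum.inl (i, ⟨2^d - 1, Nat.sub_lt (Nat.two_pow_pos d) one_pos⟩), hE⟩
  | 0, j, hj, h => by
      have hjlt := j.isLt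
      obtain rfl : j = ⟨2^d - 1, Nat.sub_lt (Nat.two_pow_pos d) one_pos⟩ :=
        Fin.ext (by simp only []; omega)
      exact SimpleGraph.Reachable.refl _
  | (k+1), j, hj, h => by
      have hjlt := j.isLt
      have hm := four_le hd
      set j' : Fin (2^d) := ⟨(j:ℕ)+1, by omega⟩ with hj'
      have hw' : lbWeight d Xs Ys M (Sum.inl (i,j')) = 1 := by
        rcases Nat.lt_or_ge ((j:ℕ)+1) (2^d - 1) with hk | hk
        · exact w_one_interior Xs Ys M (by show (j:ℕ)+1 ≠ 0; omega) (by show (j:ℕ)+1 ≠ 2^d - 1; omega)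
        · show (if (j':ℕ) = 0 then (if i ∈ Xs then M else 1) else if (j':ℕ) = 2^d - 1 then (if i ∈ Ys then M else 1) else (1:ℝ)) = 1
          rw [if_neg (by show (j:ℕ)+1 ≠ 0; omega), if_pos (by show (j:ℕ)+1 = 2^d - 1; omega), if_neg hY]
      have hadj : (lbGraph d).Adj (Sum.inl (i,j)) (Sum.inl (i,j')) := by
        refine adj_iff.mpr ?_
        exact ⟨inl_ne_inl (by simp [hj']), Or.inl ⟨rfl, by simp [hj']⟩⟩
      have hstep : ((lbGraph d).induce {u | lbWeight d Xs Ys M u = 1}).Adj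
          ⟨Sum.inl (i,j), h⟩ ⟨Sum.inl (i,j'), hw'⟩ := hadj
      exact hstep.reachable.trans (row_right hd i hY hE k j' (by simp [hj']; omega) hw')

lemma root_w : lbWeight d Xs Ys M (rootV d) = 1 ∨ ¬ 0 < d := by
  by_cases h : 0 < d
  · exact Or.inl (w_tree_internal Xs Ys M (show ((⟨0, Nat.succ_pos d⟩ : Fin (d+1)):ℕ) < d from h))
  · exact Or.inr h

lemma reach_root (hd : 2 ≤ d) (hdisj : Xs ∩ Ys = ∅)
    (hroot : lbWeight d Xs Ys M (rootV d) = 1) :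
    ∀ (v : LBVertex d) (h : lbWeight d Xs Ys M v = 1),
      ((lbGraph d).induce {u | lbWeight d Xs Ys M u = 1}).Reachable
        ⟨v, h⟩ ⟨rootV d, hroot⟩ := by
  intro v h
  have hm := four_le hd
  cases v with
  | inr s =>
    obtain ⟨l, t⟩ := s
    exact tree_reach Xs Ys M (by omega) (l:ℕ) l t rfl h hroot
  | inl p =>
    obtain ⟨i, j⟩ := p
    by_cases hX : i ∈ Xs
    · have hY : i ∉ Ys := by
        intro hY
        have := Finset.mem_inter.mpr ⟨hX, hY⟩
        rw [hdisj] at this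
        simp at this
      have hE : lbWeight d Xs Ys M
          (Sum.inl (i, ⟨2^d - 1, Nat.sub_lt (Nat.two_pow_pos d) one_pos⟩)) = 1 := by
        show (if (2^d - 1 : ℕ) = 0 then (if i ∈ Xs then M else (1:ℝ))
          else if (2^d - 1 : ℕ) = 2^d - 1 then (if i ∈ Ys then M else 1) else (1:ℝ)) = 1
        rw [if_neg (by omega), if_pos rfl, if_neg hY]
      have h1 := row_right Xs Ys M hd i hY hE (2^d - 1 - (j:ℕ)) j rfl h
      -- connect rightmost column to right leaf
      have hld : ¬ ((⟨d, by omega⟩ : Fin (d+1)) : ℕ) < d := by simp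
      have hLw : lbWeight d Xs Ys M
          (Sum.inr ⟨⟨d, by omega⟩, ⟨2^d - 1, Nat.sub_lt (Nat.two_pow_pos d) one_pos⟩⟩) = 1 :=
        w_leaf_good Xs Ys M hld (Or.inr rfl)
      have hadj : (lbGraph d).Adj
          (Sum.inl (i, ⟨2^d - 1, Nat.sub_lt (Nat.two_pow_pos d) one_pos⟩))
          (Sum.inr ⟨⟨d, by omega⟩, ⟨2^d - 1, Nat.sub_lt (Nat.two_pow_pos d) one_pos⟩⟩) := by
        refine adj_iff.mpr ?_
        exact ⟨Sum.inl_ne_inr, Or.inr ⟨rfl, rfl⟩⟩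
      have hstep : ((lbGraph d).induce {u | lbWeight d Xs Ys M u = 1}).Adj
          ⟨Sum.inl (i, ⟨2^d - 1, Nat.sub_lt (Nat.two_pow_pos d) one_pos⟩), hE⟩
          ⟨Sum.inr ⟨⟨d, by omega⟩, ⟨2^d - 1, Nat.sub_lt (Nat.two_pow_pos d) one_pos⟩⟩, hLw⟩ := hadj
      exact (h1.trans hstep.reachable).trans
        (tree_reach Xs Ys M (by omega) d _ _ rfl hLw hroot)
    · have h0 : lbWeight d Xs Ys M (Sum.inl (i, ⟨0, Nat.two_pow_pos d⟩)) = 1 := by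
        show (if (0:ℕ) = 0 then (if i ∈ Xs then M else (1:ℝ))
          else if (0:ℕ) = 2^d - 1 then (if i ∈ Ys then M else 1) else (1:ℝ)) = 1
        rw [if_pos rfl, if_neg hX]
      have h1 := row_left Xs Ys M hd i hX h0 (j:ℕ) j rfl h
      have hld : ¬ ((⟨d, by omega⟩ : Fin (d+1)) : ℕ) < d := by simp
      have hLw : lbWeight d Xs Ys M
          (Sum.inr ⟨⟨d, by omega⟩, ⟨0, Nat.two_pow_pos d⟩⟩) = 1 :=
        w_leaf_good Xs Ys M hld (Or.inl rfl)
      have hadj : (lbGraph d).Adj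
          (Sum.inl (i, ⟨0, Nat.two_pow_pos d⟩))
          (Sum.inr ⟨⟨d, by omega⟩, ⟨0, Nat.two_pow_pos d⟩⟩) := by
        refine adj_iff.mpr ?_
        exact ⟨Sum.inl_ne_inr, Or.inr ⟨rfl, rfl⟩⟩
      have hstep : ((lbGraph d).induce {u | lbWeight d Xs Ys M u = 1}).Adj
          ⟨Sum.inl (i, ⟨0, Nat.two_pow_pos d⟩), h0⟩
          ⟨Sum.inr ⟨⟨d, by omega⟩, ⟨0, Nat.two_pow_pos d⟩⟩, hLw⟩ := hadj
      exact (h1.trans hstep.reachable).trans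
        (tree_reach Xs Ys M (by omega) d _ _ rfl hLw hroot)

lemma part2_dom (hd : 2 ≤ d) :
    ∀ v, v ∉ {u | lbWeight d Xs Ys M u = 1} →
      ∃ u ∈ {u | lbWeight d Xs Ys M u = 1}, (lbGraph d).Adj v u := by
  intro v hv
  have hm := four_le hd
  cases v with
  | inl p =>
    obtain ⟨i, j⟩ := p
    change ¬ (lbWeight d Xs Ys M _ = 1) at hv
    by_cases hj0 : (j:ℕ) = 0
    · refine ⟨Sum.inl (i, ⟨1, by omega⟩), ?_, ?_⟩
      · exact w_one_interior Xs Ys M (by simp) (by simp; omega)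
      · refine adj_iff.mpr ?_
        exact ⟨inl_ne_inl (by simp [hj0]), Or.inl ⟨rfl, by simp [hj0]⟩⟩
    · by_cases hj1 : (j:ℕ) = 2^d - 1
      · refine ⟨Sum.inl (i, ⟨2^d - 2, by omega⟩), ?_, ?_⟩
        · exact w_one_interior Xs Ys M (by simp; omega) (by simp; omega)
        · refine adj_iff.mpr ?_
          exact ⟨inl_ne_inl (by simp; omega), Or.inr ⟨rfl, by simp; omega⟩⟩
      · exact absurd (w_one_interior Xs Ys M hj0 hj1) hv
  | inr s =>
    obtain ⟨l, t⟩ := s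
    change ¬ (lbWeight d Xs Ys M _ = 1) at hv
    have hl : ¬ (l:ℕ) < d := fun hlt => hv (w_tree_internal Xs Ys M hlt)
    have hld : (l:ℕ) = d := by have := l.isLt; omega
    have htlt : (t:ℕ) < 2^d := by
      have h1 := t.isLt
      have h2 : (2:ℕ)^(l:ℕ) = 2^d := by rw [hld]
      omega
    have h2d : (2:ℕ)^d = 2^(d-1) * 2 := by
      rw [← pow_succ]; congr 1; omega
    refine ⟨Sum.inr ⟨⟨d-1, by omega⟩, ⟨(t:ℕ)/2, by show (t:ℕ)/2 < 2^(d-1); omega⟩⟩, ?_, ?_⟩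
    · exact w_tree_internal Xs Ys M (show d - 1 < d by omega)
    · refine adj_iff.mpr ?_
      refine ⟨inr_ne_inr (by simp; omega), Or.inr ?_⟩
      show ((l:ℕ) = (d-1) + 1) ∧ ((t:ℕ) = 2 * ((t:ℕ)/2) ∨ (t:ℕ) = 2 * ((t:ℕ)/2) + 1)
      exact ⟨by omega, by omega⟩

end Main
end LBP

open scoped Classical in
/-- In the lower-bound graph with weights encoding set-disjointness instances `X, Y`, with
`M = α·n + 1` (`n` = number of vertices): if `X ∩ Y ≠ ∅` then every connected dominating set
contains a vertex of weight `M`, while if `X ∩ Y = ∅` then the set of all weight-1 vertices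
is a connected dominating set of total weight less than `n`. -/
theorem stmt_19 (d : ℕ) (hd : 2 ≤ d) (α : ℝ) (hα : 0 < α)
    (Xs Ys : Finset (Fin (2 ^ d))) (n M : ℝ)
    (hn : n = Fintype.card (LBVertex d)) (hM : M = α * n + 1) :
    ((Xs ∩ Ys).Nonempty →
      ∀ D : Set (LBVertex d),
        (∀ v, v ∉ D → ∃ u ∈ D, (lbGraph d).Adj v u) →
        ((lbGraph d).induce D).Connected →
        ∃ v ∈ D, lbWeight d Xs Ys M v = M) ∧
    (Xs ∩ Ys = ∅ →
      (∀ v, v ∉ {u | lbWeight d Xs Ys M u = 1} →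
        ∃ u ∈ {u | lbWeight d Xs Ys M u = 1}, (lbGraph d).Adj v u) ∧
      ((lbGraph d).induce {u | lbWeight d Xs Ys M u = 1}).Connected ∧
      (∑ v ∈ Finset.univ.filter (fun u : LBVertex d => lbWeight d Xs Ys M u = 1),
        lbWeight d Xs Ys M v) < n) := by
  have hm := LBP.four_le hd
  have hcard1 : 1 ≤ Fintype.card (LBVertex d) :=
    @Fintype.card_pos _ _ ⟨LBP.rootV d⟩
  have hn1 : (1:ℝ) ≤ n := by
    rw [hn]; exact_mod_cast hcard1
  have hM1 : 1 < M := by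
    rw [hM]; nlinarith
  constructor
  · rintro ⟨i, hi⟩ D hdom hconn
    obtain ⟨hiX, hiY⟩ := Finset.mem_inter.mp hi
    exact LBP.part1 Xs Ys M hd i hiX hiY D hdom hconn
  · intro hdisj
    have hroot : lbWeight d Xs Ys M (LBP.rootV d) = 1 := by
      rcases LBP.root_w Xs Ys M with h | h
      · exact h
      · omega
    refine ⟨LBP.part2_dom Xs Ys M hd, ?_, ?_⟩
    · rw [SimpleGraph.connected_iff]
      constructor
      · rintro ⟨v, hv⟩ ⟨u, hu⟩
        exact (LBP.reach_root Xs Ys M hd hdisj hroot v hv).trans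
          (LBP.reach_root Xs Ys M hd hdisj hroot u hu).symm
      · exact ⟨⟨LBP.rootV d, hroot⟩⟩
    · set S := Finset.univ.filter (fun u : LBVertex d => lbWeight d Xs Ys M u = 1) with hS
      have hsum : (∑ v ∈ S, lbWeight d Xs Ys M v) = (S.card : ℝ) := by
        rw [Finset.sum_congr rfl (fun v hv => (Finset.mem_filter.mp hv).2)]
        rw [Finset.sum_const, nsmul_eq_mul, mul_one]
      have hbad : (Sum.inr ⟨⟨d, by omega⟩, ⟨1, by show (1:ℕ) < 2^d; omega⟩⟩ : LBVertex d) ∉ S := by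
        intro hmem
        have hw1 := (Finset.mem_filter.mp hmem).2
        have : lbWeight d Xs Ys M (Sum.inr ⟨⟨d, by omega⟩, ⟨1, by show (1:ℕ) < 2^d; omega⟩⟩ : LBVertex d) = M :=
          LBP.w_leaf_mid Xs Ys M hd rfl (by show (1:ℕ) ≠ 0; omega) (by show (1:ℕ) ≠ 2^d - 1; omega)
        rw [this] at hw1
        linarith
      have hlt : S.card < Fintype.card (LBVertex d) := by
        apply Finset.card_lt_card
        rw [Finset.ssubset_iff_of_subset (Finset.subset_univ S)]
        exact ⟨_, Finset.mem_univ _, hbad⟩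
      rw [hsum, hn]
      exact_mod_cast hlt
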